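/- arXiv:1404.4708 — 2 statements merged into one kernel-verified Lean document; each statement's English description precedes it below -/
import Mathlib

section
/- Let X and Y be Banach spaces over ℂ and let S : X → Y, T : Y → X be bounded linear operators such that R(S∘T) and R(T∘S) are finite-dimensional subspaces of Y and X respectively. Then S maps R(T∘S) into R(S∘T) and T maps R(S∘T) into R(T∘S), so that S and T induce bounded linear operators S̄ : X/R(T∘S) → Y/R(S∘T) and T̄ : Y/R(S∘T) → X/R(T∘S) on the quotient Banach spaces. These satisfy S̄ ∘ T̄ = 0 and T̄ ∘ S̄ = 0; moreover N(S̄)/R(T̄) is linearly isomorphic to N(S)/(N(S)∩R(T)) and N(T̄)/R(S̄) is linearly isomorphic to N(T)/(N(T)∩R(S)). Consequently, (S,T) is a Fredholm pair if and only if (S̄,T̄) is a Fredholm symmetrical pair. -/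
open Module

/-- The space `A / (A ∩ B)` for submodules `A B` of a module, realized as the quotient of `A`
by the preimage of `B` under the inclusion of `A`. -/
abbrev relQuot {X : Type*} [AddCommGroup X] [Module ℂ X] (A B : Submodule ℂ X) : Type _ :=
  ↥A ⧸ (B.comap A.subtype)

/-- The dimension of `A / (A ∩ B)`. -/
noncomputable def relDim {X : Type*} [AddCommGroup X] [Module ℂ X] (A B : Submodule ℂ X) : ℕ :=
  finrank ℂ (relQuot A B)

/-- `(S, T)` is a Fredholm pair: the four quotients `N(S)/(N(S) ∩ R(T))`,
`R(T)/(N(S) ∩ R(T))`, `N(T)/(N(T) ∩ R(S))` and `R(S)/(N(T) ∩ R(S))` are all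
finite dimensional. -/
def IsFredholmPair {X Y : Type*} [SeminormedAddCommGroup X] [NormedSpace ℂ X]
    [SeminormedAddCommGroup Y] [NormedSpace ℂ Y] (S : X →L[ℂ] Y) (T : Y →L[ℂ] X) : Prop :=
  FiniteDimensional ℂ (relQuot (LinearMap.ker (S : X →ₗ[ℂ] Y)) (LinearMap.range (T : Y →ₗ[ℂ] X))) ∧
  FiniteDimensional ℂ (relQuot (LinearMap.range (T : Y →ₗ[ℂ] X)) (LinearMap.ker (S : X →ₗ[ℂ] Y))) ∧
  FiniteDimensional ℂ (relQuot (LinearMap.ker (T : Y →ₗ[ℂ] X)) (LinearMap.range (S : X →ₗ[ℂ] Y))) ∧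
  FiniteDimensional ℂ (relQuot (LinearMap.range (S : X →ₗ[ℂ] Y)) (LinearMap.ker (T : Y →ₗ[ℂ] X)))

/-- Quotienting commutes with taking relative quotients of nested submodules. -/
lemma aux_relQuot_map {X : Type*} [AddCommGroup X] [Module ℂ X] (A U V : Submodule ℂ X)
    (hAU : A ≤ U) (hUV : U ≤ V) :
    Nonempty (relQuot (V.map A.mkQ) (U.map A.mkQ) ≃ₗ[ℂ] relQuot V U) := by
  classical
  set f : ↥V →ₗ[ℂ] ↥(V.map A.mkQ) :=
    LinearMap.codRestrict (V.map A.mkQ) (A.mkQ.comp V.subtype)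
      (fun v => ⟨v.1, v.2, rfl⟩) with hf
  set φ : ↥V →ₗ[ℂ] relQuot (V.map A.mkQ) (U.map A.mkQ) :=
    (Submodule.mkQ _).comp f with hφ
  have hφ_apply : ∀ v : ↥V, φ v = Submodule.Quotient.mk (f v) := fun v => rfl
  have hsurj : Function.Surjective φ := by
    rintro z
    obtain ⟨⟨q, hq⟩, rfl⟩ := Submodule.Quotient.mk_surjective _ z
    obtain ⟨v, hv, rfl⟩ := hq
    exact ⟨⟨v, hv⟩, rfl⟩
  have hker : LinearMap.ker φ = U.comap V.subtype := by
    ext v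
    rw [LinearMap.mem_ker, hφ_apply, Submodule.Quotient.mk_eq_zero, Submodule.mem_comap,
      Submodule.mem_comap]
    constructor
    · rintro ⟨u, hu, huv⟩
      have huv' : (Submodule.Quotient.mk u : X ⧸ A) = Submodule.Quotient.mk (v : X) := huv
      have hsub : u - (v : X) ∈ A := (Submodule.Quotient.eq A).1 huv'
      have hmem := U.sub_mem hu (hAU hsub)
      rw [sub_sub_cancel] at hmem
      exact hmem
    · intro hv
      exact ⟨v, hv, rfl⟩
  exact ⟨((Submodule.quotEquivOfEq _ _ hker.symm).trans
    (φ.quotKerEquivOfSurjective hsurj)).symm⟩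

/-- Second isomorphism theorem, phrased with `relQuot`. -/
lemma aux_relQuot_sup {X : Type*} [AddCommGroup X] [Module ℂ X] (p q : Submodule ℂ X) :
    Nonempty (relQuot (p ⊔ q) q ≃ₗ[ℂ] relQuot p q) := by
  have h : Submodule.comap p.subtype q = Submodule.comap p.subtype (p ⊓ q) := by
    rw [Submodule.comap_inf, Submodule.comap_subtype_self, top_inf_eq]
  exact ⟨((Submodule.quotEquivOfEq _ _ h).trans
    (LinearMap.quotientInfEquivSupQuotient p q)).symm⟩

lemma aux_relQuot_subsingleton {X : Type*} [AddCommGroup X] [Module ℂ X]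
    {R K : Submodule ℂ X} (h : R ≤ K) : Subsingleton (relQuot R K) := by
  have ht : K.comap R.subtype = ⊤ := eq_top_iff.2 fun x _ => h x.2
  exact Submodule.Quotient.subsingleton_iff.2 ht

lemma aux_finite_of_subsingleton {M : Type*} [AddCommGroup M] [Module ℂ M]
    (h : Subsingleton M) : FiniteDimensional ℂ M :=
  Module.Finite.of_surjective (0 : ℂ →ₗ[ℂ] M) fun m => ⟨0, (h.elim _ m)⟩

lemma aux_fd_relQuot {X Y : Type*} [NormedAddCommGroup X] [NormedSpace ℂ X]
    [NormedAddCommGroup Y] [NormedSpace ℂ Y] (S : X →L[ℂ] Y) (RT : Submodule ℂ X)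
    (hfd : FiniteDimensional ℂ ↥(RT.map (S : X →ₗ[ℂ] Y))) :
    FiniteDimensional ℂ (relQuot RT (LinearMap.ker (S : X →ₗ[ℂ] Y))) := by
  classical
  set ψ0 : ↥RT →ₗ[ℂ] ↥(RT.map (S : X →ₗ[ℂ] Y)) :=
    LinearMap.codRestrict (RT.map (S : X →ₗ[ℂ] Y)) ((S : X →ₗ[ℂ] Y).comp RT.subtype)
      (fun v => ⟨v.1, v.2, rfl⟩) with hψ0
  have hψ0ker : ∀ v : ↥RT, ψ0 v = 0 ↔ S (v : X) = 0 := by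
    intro v
    constructor
    · intro hv
      exact congrArg Subtype.val hv
    · intro hv
      exact Subtype.ext hv
  have hle : (LinearMap.ker (S : X →ₗ[ℂ] Y)).comap RT.subtype ≤ LinearMap.ker ψ0 := by
    intro v hv
    exact LinearMap.mem_ker.2 ((hψ0ker v).2 hv)
  set ψ := Submodule.liftQ _ ψ0 hle with hψ
  have hinj : Function.Injective ψ := by
    rw [← LinearMap.ker_eq_bot]
    apply Submodule.ker_liftQ_eq_bot
    intro v hv
    exact (hψ0ker v).1 hv
  exact FiniteDimensional.of_injective ψ hinj

set_option maxHeartbeats 1000000 in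
/-- Remark 5.1: if `R(S∘T)` and `R(T∘S)` are finite dimensional, then `S` and `T`
induce bounded operators `S̄`, `T̄` between the quotient Banach spaces `X/R(T∘S)` and
`Y/R(S∘T)`, satisfying `S̄∘T̄ = 0`, `T̄∘S̄ = 0`, with `N(S̄)/R(T̄) ≅ N(S)/(N(S)∩R(T))`
and `N(T̄)/R(S̄) ≅ N(T)/(N(T)∩R(S))`; consequently `(S,T)` is a Fredholm pair iff
`(S̄,T̄)` is a Fredholm (symmetrical) pair. -/
theorem fredholmPair_iff_quotient_symmetrical {X Y : Type*}
    [NormedAddCommGroup X] [NormedSpace ℂ X] [CompleteSpace X]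
    [NormedAddCommGroup Y] [NormedSpace ℂ Y] [CompleteSpace Y]
    (S : X →L[ℂ] Y) (T : Y →L[ℂ] X)
    (hST : FiniteDimensional ℂ ↥(LinearMap.range (S.comp T : Y →ₗ[ℂ] Y)))
    (hTS : FiniteDimensional ℂ ↥(LinearMap.range (T.comp S : X →ₗ[ℂ] X))) :
    Submodule.map (S : X →ₗ[ℂ] Y) (LinearMap.range (T.comp S : X →ₗ[ℂ] X)) ≤ LinearMap.range (S.comp T : Y →ₗ[ℂ] Y) ∧
    Submodule.map (T : Y →ₗ[ℂ] X) (LinearMap.range (S.comp T : Y →ₗ[ℂ] Y)) ≤ LinearMap.range (T.comp S : X →ₗ[ℂ] X) ∧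
    ∃ (Sb : (X ⧸ LinearMap.range (T.comp S : X →ₗ[ℂ] X)) →L[ℂ] (Y ⧸ LinearMap.range (S.comp T : Y →ₗ[ℂ] Y)))
      (Tb : (Y ⧸ LinearMap.range (S.comp T : Y →ₗ[ℂ] Y)) →L[ℂ] (X ⧸ LinearMap.range (T.comp S : X →ₗ[ℂ] X))),
      (∀ x : X, Sb (Submodule.Quotient.mk x) = Submodule.Quotient.mk (S x)) ∧
      (∀ y : Y, Tb (Submodule.Quotient.mk y) = Submodule.Quotient.mk (T y)) ∧
      Sb.comp Tb = 0 ∧ Tb.comp Sb = 0 ∧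
      Nonempty (relQuot (LinearMap.ker Sb.toLinearMap) (LinearMap.range Tb.toLinearMap) ≃ₗ[ℂ]
        relQuot (LinearMap.ker (S : X →ₗ[ℂ] Y)) (LinearMap.range (T : Y →ₗ[ℂ] X))) ∧
      Nonempty (relQuot (LinearMap.ker Tb.toLinearMap) (LinearMap.range Sb.toLinearMap) ≃ₗ[ℂ]
        relQuot (LinearMap.ker (T : Y →ₗ[ℂ] X)) (LinearMap.range (S : X →ₗ[ℂ] Y))) ∧
      (IsFredholmPair S T ↔ IsFredholmPair Sb Tb) := by
  classical
  set A := LinearMap.range (T.comp S : X →ₗ[ℂ] X) with hA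
  set B := LinearMap.range (S.comp T : Y →ₗ[ℂ] Y) with hB
  have h1 : Submodule.map (S : X →ₗ[ℂ] Y) A ≤ B := by
    rintro y ⟨x, hx, rfl⟩
    obtain ⟨u, rfl⟩ := hx
    exact ⟨S u, rfl⟩
  have h2 : Submodule.map (T : Y →ₗ[ℂ] X) B ≤ A := by
    rintro x ⟨y, hy, rfl⟩
    obtain ⟨u, rfl⟩ := hy
    exact ⟨T u, rfl⟩
  have hleS : A ≤ B.comap (S : X →ₗ[ℂ] Y) := by
    rintro x ⟨u, rfl⟩
    exact ⟨S u, rfl⟩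
  have hleT : B ≤ A.comap (T : Y →ₗ[ℂ] X) := by
    rintro y ⟨u, rfl⟩
    exact ⟨T u, rfl⟩
  set Sl : (X ⧸ A) →ₗ[ℂ] (Y ⧸ B) := Submodule.mapQ A B (S : X →ₗ[ℂ] Y) hleS with hSl
  set Tl : (Y ⧸ B) →ₗ[ℂ] (X ⧸ A) := Submodule.mapQ B A (T : Y →ₗ[ℂ] X) hleT with hTl
  have hScont : Continuous Sl := by
    rw [(Submodule.isOpenQuotientMap_mkQ A).isQuotientMap.continuous_iff]
    have : (Sl ∘ A.mkQ) = fun x => B.mkQ (S x) := by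
      funext x
      simp [hSl, Submodule.mapQ_apply]
    rw [this]
    exact (Submodule.isOpenQuotientMap_mkQ B).continuous.comp S.continuous
  have hTcont : Continuous Tl := by
    rw [(Submodule.isOpenQuotientMap_mkQ B).isQuotientMap.continuous_iff]
    have : (Tl ∘ B.mkQ) = fun y => A.mkQ (T y) := by
      funext y
      simp [hTl, Submodule.mapQ_apply]
    rw [this]
    exact (Submodule.isOpenQuotientMap_mkQ A).continuous.comp T.continuous
  set Sb : (X ⧸ A) →L[ℂ] (Y ⧸ B) := ⟨Sl, hScont⟩ with hSb
  set Tb : (Y ⧸ B) →L[ℂ] (X ⧸ A) := ⟨Tl, hTcont⟩ with hTb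
  have hSbmk : ∀ x : X, Sb (Submodule.Quotient.mk x) = Submodule.Quotient.mk (S x) :=
    fun x => rfl
  have hTbmk : ∀ y : Y, Tb (Submodule.Quotient.mk y) = Submodule.Quotient.mk (T y) :=
    fun y => rfl
  have hcompST : Sb.comp Tb = 0 := by
    ext z
    obtain ⟨y, rfl⟩ := Submodule.Quotient.mk_surjective _ z
    rw [ContinuousLinearMap.comp_apply, hTbmk, hSbmk]
    exact (Submodule.Quotient.mk_eq_zero _).2 ⟨y, rfl⟩
  have hcompTS : Tb.comp Sb = 0 := by
    ext z
    obtain ⟨x, rfl⟩ := Submodule.Quotient.mk_surjective _ z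
    rw [ContinuousLinearMap.comp_apply, hSbmk, hTbmk]
    exact (Submodule.Quotient.mk_eq_zero _).2 ⟨x, rfl⟩
  -- kernel and range identifications
  have hA_le_RT : A ≤ LinearMap.range (T : Y →ₗ[ℂ] X) := by
    rintro x ⟨u, rfl⟩
    exact ⟨S u, rfl⟩
  have hB_le_RS : B ≤ LinearMap.range (S : X →ₗ[ℂ] Y) := by
    rintro y ⟨u, rfl⟩
    exact ⟨T u, rfl⟩
  have hkerSb : LinearMap.ker Sb.toLinearMap = (LinearMap.ker (S : X →ₗ[ℂ] Y) ⊔ LinearMap.range (T : Y →ₗ[ℂ] X)).map A.mkQ := by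
    ext z
    obtain ⟨x, rfl⟩ := Submodule.Quotient.mk_surjective _ z
    rw [LinearMap.mem_ker, ContinuousLinearMap.coe_coe, hSbmk]
    constructor
    · intro hz
      have hx : S x ∈ B := (Submodule.Quotient.mk_eq_zero _).1 hz
      obtain ⟨y, hy⟩ := hx
      have hy' : S (T y) = S x := hy
      have h1 : x - T y ∈ LinearMap.ker (S : X →ₗ[ℂ] Y) := by
        rw [LinearMap.mem_ker, map_sub, ContinuousLinearMap.coe_coe, hy', sub_self]
      have h2 : x ∈ LinearMap.ker (S : X →ₗ[ℂ] Y) ⊔ LinearMap.range (T : Y →ₗ[ℂ] X) :=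
        Submodule.mem_sup.2 ⟨x - T y, h1, T y, ⟨y, rfl⟩, by abel⟩
      exact ⟨x, h2, rfl⟩
    · rintro ⟨w, hw, hwx⟩
      obtain ⟨k, hk, t, ⟨y, rfl⟩, rfl⟩ := Submodule.mem_sup.1 hw
      have hS : S (k + T y) = S (T y) := by
        rw [map_add, show S k = 0 from LinearMap.mem_ker.1 hk, zero_add]
      calc (Submodule.Quotient.mk (S x) : Y ⧸ B)
          = Sb (Submodule.Quotient.mk x) := (hSbmk x).symm
        _ = Sb (A.mkQ (k + T y)) := by rw [← hwx]; rfl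
        _ = Submodule.Quotient.mk (S (k + T y)) := hSbmk _
        _ = 0 := by
            rw [hS]
            exact (Submodule.Quotient.mk_eq_zero _).2 ⟨y, rfl⟩
  have hrangeTb : LinearMap.range Tb.toLinearMap = (LinearMap.range (T : Y →ₗ[ℂ] X)).map A.mkQ := by
    ext z
    constructor
    · rintro ⟨w, rfl⟩
      obtain ⟨y, rfl⟩ := Submodule.Quotient.mk_surjective _ w
      rw [ContinuousLinearMap.coe_coe, hTbmk]
      exact ⟨T y, ⟨y, rfl⟩, rfl⟩
    · rintro ⟨t, ⟨y, rfl⟩, rfl⟩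
      exact ⟨Submodule.Quotient.mk y, by rw [ContinuousLinearMap.coe_coe, hTbmk]; rfl⟩
  have hkerTb : LinearMap.ker Tb.toLinearMap = (LinearMap.ker (T : Y →ₗ[ℂ] X) ⊔ LinearMap.range (S : X →ₗ[ℂ] Y)).map B.mkQ := by
    ext z
    obtain ⟨y, rfl⟩ := Submodule.Quotient.mk_surjective _ z
    rw [LinearMap.mem_ker, ContinuousLinearMap.coe_coe, hTbmk]
    constructor
    · intro hz
      have hy : T y ∈ A := (Submodule.Quotient.mk_eq_zero _).1 hz
      obtain ⟨x, hx⟩ := hy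
      have hx' : T (S x) = T y := hx
      have h1 : y - S x ∈ LinearMap.ker (T : Y →ₗ[ℂ] X) := by
        rw [LinearMap.mem_ker, map_sub, ContinuousLinearMap.coe_coe, hx', sub_self]
      have h2 : y ∈ LinearMap.ker (T : Y →ₗ[ℂ] X) ⊔ LinearMap.range (S : X →ₗ[ℂ] Y) :=
        Submodule.mem_sup.2 ⟨y - S x, h1, S x, ⟨x, rfl⟩, by abel⟩
      exact ⟨y, h2, rfl⟩
    · rintro ⟨w, hw, hwy⟩
      obtain ⟨k, hk, t, ⟨x, rfl⟩, rfl⟩ := Submodule.mem_sup.1 hw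
      have hT : T (k + S x) = T (S x) := by
        rw [map_add, show T k = 0 from LinearMap.mem_ker.1 hk, zero_add]
      calc (Submodule.Quotient.mk (T y) : X ⧸ A)
          = Tb (Submodule.Quotient.mk y) := (hTbmk y).symm
        _ = Tb (B.mkQ (k + S x)) := by rw [← hwy]; rfl
        _ = Submodule.Quotient.mk (T (k + S x)) := hTbmk _
        _ = 0 := by
            rw [hT]
            exact (Submodule.Quotient.mk_eq_zero _).2 ⟨x, rfl⟩
  have hrangeSb : LinearMap.range Sb.toLinearMap = (LinearMap.range (S : X →ₗ[ℂ] Y)).map B.mkQ := by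
    ext z
    constructor
    · rintro ⟨w, rfl⟩
      obtain ⟨x, rfl⟩ := Submodule.Quotient.mk_surjective _ w
      rw [ContinuousLinearMap.coe_coe, hSbmk]
      exact ⟨S x, ⟨x, rfl⟩, rfl⟩
    · rintro ⟨t, ⟨x, rfl⟩, rfl⟩
      exact ⟨Submodule.Quotient.mk x, by rw [ContinuousLinearMap.coe_coe, hSbmk]; rfl⟩
  -- the two isomorphisms
  have e1 : Nonempty (relQuot (LinearMap.ker Sb.toLinearMap) (LinearMap.range Tb.toLinearMap) ≃ₗ[ℂ]
      relQuot (LinearMap.ker (S : X →ₗ[ℂ] Y)) (LinearMap.range (T : Y →ₗ[ℂ] X))) := by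
    rw [hkerSb, hrangeTb]
    obtain ⟨e⟩ := aux_relQuot_map A (LinearMap.range (T : Y →ₗ[ℂ] X)) (LinearMap.ker (S : X →ₗ[ℂ] Y) ⊔ LinearMap.range (T : Y →ₗ[ℂ] X))
      hA_le_RT le_sup_right
    obtain ⟨e'⟩ := aux_relQuot_sup (LinearMap.ker (S : X →ₗ[ℂ] Y)) (LinearMap.range (T : Y →ₗ[ℂ] X))
    exact ⟨e.trans e'⟩
  have e2 : Nonempty (relQuot (LinearMap.ker Tb.toLinearMap) (LinearMap.range Sb.toLinearMap) ≃ₗ[ℂ]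
      relQuot (LinearMap.ker (T : Y →ₗ[ℂ] X)) (LinearMap.range (S : X →ₗ[ℂ] Y))) := by
    rw [hkerTb, hrangeSb]
    obtain ⟨e⟩ := aux_relQuot_map B (LinearMap.range (S : X →ₗ[ℂ] Y)) (LinearMap.ker (T : Y →ₗ[ℂ] X) ⊔ LinearMap.range (S : X →ₗ[ℂ] Y))
      hB_le_RS le_sup_right
    obtain ⟨e'⟩ := aux_relQuot_sup (LinearMap.ker (T : Y →ₗ[ℂ] X)) (LinearMap.range (S : X →ₗ[ℂ] Y))
    exact ⟨e.trans e'⟩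
  -- finite dimensionality of the "symmetric" parts
  have hmapS : (LinearMap.range (T : Y →ₗ[ℂ] X)).map (S : X →ₗ[ℂ] Y) = B := by
    ext y
    constructor
    · rintro ⟨t, ⟨u, rfl⟩, rfl⟩
      exact ⟨u, rfl⟩
    · rintro ⟨u, rfl⟩
      exact ⟨T u, ⟨u, rfl⟩, rfl⟩
  have hmapT : (LinearMap.range (S : X →ₗ[ℂ] Y)).map (T : Y →ₗ[ℂ] X) = A := by
    ext x
    constructor
    · rintro ⟨t, ⟨u, rfl⟩, rfl⟩
      exact ⟨u, rfl⟩
    · rintro ⟨u, rfl⟩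
      exact ⟨S u, ⟨u, rfl⟩, rfl⟩
  have fd2 : FiniteDimensional ℂ (relQuot (LinearMap.range (T : Y →ₗ[ℂ] X)) (LinearMap.ker (S : X →ₗ[ℂ] Y))) :=
    aux_fd_relQuot S (LinearMap.range (T : Y →ₗ[ℂ] X)) (hmapS ▸ hST)
  have fd4 : FiniteDimensional ℂ (relQuot (LinearMap.range (S : X →ₗ[ℂ] Y)) (LinearMap.ker (T : Y →ₗ[ℂ] X))) :=
    aux_fd_relQuot T (LinearMap.range (S : X →ₗ[ℂ] Y)) (hmapT ▸ hTS)
  have hleTS : LinearMap.range Tb.toLinearMap ≤ LinearMap.ker Sb.toLinearMap := by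
    rintro z ⟨w, rfl⟩
    rw [LinearMap.mem_ker, ContinuousLinearMap.coe_coe, ContinuousLinearMap.coe_coe, ← ContinuousLinearMap.comp_apply, hcompST]
    rfl
  have hleST : LinearMap.range Sb.toLinearMap ≤ LinearMap.ker Tb.toLinearMap := by
    rintro z ⟨w, rfl⟩
    rw [LinearMap.mem_ker, ContinuousLinearMap.coe_coe, ContinuousLinearMap.coe_coe, ← ContinuousLinearMap.comp_apply, hcompTS]
    rfl
  have fd2' : FiniteDimensional ℂ (relQuot (LinearMap.range Tb.toLinearMap) (LinearMap.ker Sb.toLinearMap)) :=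
    aux_finite_of_subsingleton (aux_relQuot_subsingleton hleTS)
  have fd4' : FiniteDimensional ℂ (relQuot (LinearMap.range Sb.toLinearMap) (LinearMap.ker Tb.toLinearMap)) :=
    aux_finite_of_subsingleton (aux_relQuot_subsingleton hleST)
  refine ⟨h1, h2, Sb, Tb, hSbmk, hTbmk, hcompST, hcompTS, e1, e2, ?_⟩
  constructor
  · rintro ⟨f1, _, f3, _⟩
    refine ⟨?_, fd2', ?_, fd4'⟩
    · haveI := f1
      exact Module.Finite.equiv e1.some.symm
    · haveI := f3
      exact Module.Finite.equiv e2.some.symm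
  · rintro ⟨g1, _, g3, _⟩
    refine ⟨?_, fd2, ?_, fd4⟩
    · haveI := g1
      exact Module.Finite.equiv e1.some
    · haveI := g3
      exact Module.Finite.equiv e2.some
end

section
/- Let X and Y be Banach spaces over ℂ and let S : X → Y, T : Y → X be bounded linear operators such that (S,T) is a Fredholm pair. Let S̄ : X/R(T∘S) → Y/R(S∘T) and T̄ : Y/R(S∘T) → X/R(T∘S) be the operators induced by S and T on the quotient Banach spaces (these exist since R(S∘T) and R(T∘S) are finite-dimensional and S maps R(T∘S) into R(S∘T), T maps R(S∘T) into R(T∘S)). Then (S,T) is a regular Fredholm pair if and only if both S̄ and T̄ are regular operators (equivalently, (S̄,T̄) is a regular Fredholm symmetrical pair). -/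
open Module



/-- A bounded operator `S` is regular if it has a generalized inverse `S'`
with `S = S ∘ S' ∘ S`. -/
def IsRegularOp {X Y : Type*} [SeminormedAddCommGroup X] [NormedSpace ℂ X]
    [SeminormedAddCommGroup Y] [NormedSpace ℂ Y] (S : X →L[ℂ] Y) : Prop :=
  ∃ S' : Y →L[ℂ] X, S.comp (S'.comp S) = S



section Helpers
variable {X Z : Type*} [SeminormedAddCommGroup X] [NormedSpace ℂ X]
  [SeminormedAddCommGroup Z] [NormedSpace ℂ Z]

noncomputable def mkQL (p : Submodule ℂ X) : X →L[ℂ] X ⧸ p :=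
  p.mkQ.mkContinuous 1 fun x => by
    simpa [one_mul] using Submodule.Quotient.norm_mk_le p x

@[simp] lemma mkQL_apply (p : Submodule ℂ X) (x : X) :
    mkQL p x = Submodule.Quotient.mk x := rfl

noncomputable def liftQL (p : Submodule ℂ X) (f : X →L[ℂ] Z) (hf : p ≤ LinearMap.ker (f : X →ₗ[ℂ] Z)) :
    (X ⧸ p) →L[ℂ] Z :=
  (p.liftQ (f : X →ₗ[ℂ] Z) hf).mkContinuous ‖f‖ <| by
    intro ξ
    refine le_of_forall_pos_le_add fun ε hε => ?_
    have hd : (0:ℝ) < ε / (‖f‖ + 1) := by positivity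
    obtain ⟨m, rfl, hm⟩ := Submodule.Quotient.norm_mk_lt ξ hd
    have h1 : ‖(p.liftQ (f : X →ₗ[ℂ] Z) hf) (Submodule.Quotient.mk m)‖ = ‖f m‖ := by
      rw [Submodule.liftQ_apply]; rfl
    have h2 : ‖f m‖ ≤ ‖f‖ * ‖m‖ := f.le_opNorm m
    have h3 : ‖f‖ * ‖m‖ ≤ ‖f‖ * (‖(Submodule.Quotient.mk m : X ⧸ p)‖ + ε / (‖f‖ + 1)) := by
      have := f.opNorm_nonneg
      nlinarith [hm.le]
    have h4 : ‖f‖ * ε / (‖f‖ + 1) ≤ ε := by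
      rw [div_le_iff₀ (by positivity)]
      nlinarith [f.opNorm_nonneg, hε.le]
    calc ‖(p.liftQ (f : X →ₗ[ℂ] Z) hf) (Submodule.Quotient.mk m)‖ = ‖f m‖ := h1
      _ ≤ ‖f‖ * ‖m‖ := h2
      _ ≤ ‖f‖ * ‖(Submodule.Quotient.mk m : X ⧸ p)‖ + ‖f‖ * ε / (‖f‖ + 1) := by
          ring_nf; ring_nf at h3; linarith
      _ ≤ ‖f‖ * ‖(Submodule.Quotient.mk m : X ⧸ p)‖ + ε := by linarith

@[simp] lemma liftQL_apply (p : Submodule ℂ X) (f : X →L[ℂ] Z) (hf : p ≤ LinearMap.ker (f : X →ₗ[ℂ] Z))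
    (x : X) : liftQL p f hf (Submodule.Quotient.mk x) = f x := by
  simp [liftQL]

end Helpers

theorem aux_regular_iff {X Y : Type*}
    [NormedAddCommGroup X] [NormedSpace ℂ X] [CompleteSpace X]
    [NormedAddCommGroup Y] [NormedSpace ℂ Y] [CompleteSpace Y]
    (S : X →L[ℂ] Y) (T : Y →L[ℂ] X) (p : Submodule ℂ X) (q : Submodule ℂ Y)
    [hp : FiniteDimensional ℂ p] [hq : FiniteDimensional ℂ q]
    (hq2 : ∀ y ∈ q, ∃ w : Y, S (T w) = y)
    (hp2 : ∀ x ∈ p, ∃ w : X, T (S w) = x)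
    (Sb : (X ⧸ p) →L[ℂ] (Y ⧸ q)) (Tb : (Y ⧸ q) →L[ℂ] (X ⧸ p))
    (hSb : ∀ x : X, Sb (Submodule.Quotient.mk x) = Submodule.Quotient.mk (S x))
    (hTb : ∀ y : Y, Tb (Submodule.Quotient.mk y) = Submodule.Quotient.mk (T y)) :
    ((∃ S' : Y →L[ℂ] X, S.comp (S'.comp S) = S) ∧
      (∃ T' : X →L[ℂ] Y, T.comp (T'.comp T) = T)) ↔
    ((∃ S' : (Y ⧸ q) →L[ℂ] (X ⧸ p), Sb.comp (S'.comp Sb) = Sb) ∧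
      (∃ T' : (X ⧸ p) →L[ℂ] (Y ⧸ q), Tb.comp (T'.comp Tb) = Tb)) := by
  classical
  have hqS : q ≤ LinearMap.range (S : X →ₗ[ℂ] Y) := by
    intro y hy; obtain ⟨w, hw⟩ := hq2 y hy; exact ⟨T w, hw⟩
  have hpT : p ≤ LinearMap.range (T : Y →ₗ[ℂ] X) := by
    intro x hx; obtain ⟨w, hw⟩ := hp2 x hx; exact ⟨S w, hw⟩
  -- projections
  obtain ⟨fp, hfp⟩ := Submodule.ClosedComplemented.of_finiteDimensional p
  obtain ⟨fq, hfq⟩ := Submodule.ClosedComplemented.of_finiteDimensional q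
  set Pp : X →L[ℂ] X := p.subtypeL.comp fp with hPpdef
  set Qq : Y →L[ℂ] Y := q.subtypeL.comp fq with hQqdef
  have hPpmem : ∀ x, Pp x ∈ p := fun x => (fp x).2
  have hQqmem : ∀ y, Qq y ∈ q := fun y => (fq y).2
  have hPpid : ∀ x ∈ p, Pp x = x := fun x hx => by
    simpa [hPpdef] using congrArg Subtype.val (hfp ⟨x, hx⟩)
  have hQqid : ∀ y ∈ q, Qq y = y := fun y hy => by
    simpa [hQqdef] using congrArg Subtype.val (hfq ⟨y, hy⟩)
  -- sections
  set σ : (X ⧸ p) →L[ℂ] X :=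
    liftQL p (ContinuousLinearMap.id ℂ X - Pp) (fun x hx => by
      simp [ContinuousLinearMap.sub_apply, hPpid x hx]) with hσdef
  set τ : (Y ⧸ q) →L[ℂ] Y :=
    liftQL q (ContinuousLinearMap.id ℂ Y - Qq) (fun y hy => by
      simp [ContinuousLinearMap.sub_apply, hQqid y hy]) with hτdef
  have hσ : ∀ x : X, σ (Submodule.Quotient.mk x) = x - Pp x := fun x => by
    rw [hσdef]; exact liftQL_apply _ _ _ x
  have hτ : ∀ y : Y, τ (Submodule.Quotient.mk y) = y - Qq y := fun y => by
    rw [hτdef]; exact liftQL_apply _ _ _ y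
  have hσmk : ∀ u : X ⧸ p, Submodule.Quotient.mk (σ u) = u := by
    intro u
    obtain ⟨x, rfl⟩ := Submodule.Quotient.mk_surjective p u
    rw [hσ]
    exact (Submodule.Quotient.eq p).mpr (by simpa using p.neg_mem (hPpmem x))
  have hτmk : ∀ u : Y ⧸ q, Submodule.Quotient.mk (τ u) = u := by
    intro u
    obtain ⟨y, rfl⟩ := Submodule.Quotient.mk_surjective q u
    rw [hτ]
    exact (Submodule.Quotient.eq q).mpr (by simpa using q.neg_mem (hQqmem y))
  -- right inverses on the finite dimensional subspaces
  obtain ⟨Lq, hLq⟩ : ∃ L : q →L[ℂ] X, ∀ r : q, S (L r) = (r : Y) := by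
    let b := Basis.ofVectorSpace ℂ q
    choose g hg using fun i => LinearMap.mem_range.mp (hqS (b i).2)
    refine ⟨LinearMap.toContinuousLinearMap (b.constr ℂ g), fun r => ?_⟩
    have hc : ((S : X →ₗ[ℂ] Y).comp (b.constr ℂ g)) = q.subtype := by
      refine b.ext fun i => ?_
      simp [Basis.constr_basis, hg]; exact hg i
    have := DFunLike.congr_fun hc r
    simpa using this
  obtain ⟨Lp, hLp⟩ : ∃ L : p →L[ℂ] Y, ∀ r : p, T (L r) = (r : X) := by
    let b := Basis.ofVectorSpace ℂ p
    choose g hg using fun i => LinearMap.mem_range.mp (hpT (b i).2)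
    refine ⟨LinearMap.toContinuousLinearMap (b.constr ℂ g), fun r => ?_⟩
    have hc : ((T : Y →ₗ[ℂ] X).comp (b.constr ℂ g)) = p.subtype := by
      refine b.ext fun i => ?_
      simp [Basis.constr_basis, hg]; exact hg i
    have := DFunLike.congr_fun hc r
    simpa using this
  constructor
  · rintro ⟨⟨S', hS'⟩, ⟨T', hT'⟩⟩
    constructor
    · refine ⟨(mkQL p).comp (S'.comp τ), ?_⟩
      ext1 ξ
      obtain ⟨x, rfl⟩ := Submodule.Quotient.mk_surjective p ξ
      have hS'x : ∀ z, S (S' (S z)) = S z := fun z => by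
        simpa using DFunLike.congr_fun hS' z
      obtain ⟨w, hw⟩ := hq2 _ (hQqmem (S x))
      simp only [ContinuousLinearMap.comp_apply, hSb, hτ, mkQL_apply]
      have h5 : S (S' (S x - Qq (S x))) = S x - S (T w) := by
        rw [map_sub, map_sub, hS'x, ← hw]
        rw [hS'x (T w)]
      rw [h5]
      refine (Submodule.Quotient.eq q).mpr ?_
      have : S x - S (T w) - S x = -(S (T w)) := by abel
      rw [this, hw]
      exact q.neg_mem (hQqmem (S x))
    · refine ⟨(mkQL q).comp (T'.comp σ), ?_⟩
      ext1 ξ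
      obtain ⟨y, rfl⟩ := Submodule.Quotient.mk_surjective q ξ
      have hT'y : ∀ z, T (T' (T z)) = T z := fun z => by
        simpa using DFunLike.congr_fun hT' z
      obtain ⟨w, hw⟩ := hp2 _ (hPpmem (T y))
      simp only [ContinuousLinearMap.comp_apply, hTb, hσ, mkQL_apply]
      have h5 : T (T' (T y - Pp (T y))) = T y - T (S w) := by
        rw [map_sub, map_sub, hT'y, ← hw]
        rw [hT'y (S w)]
      rw [h5]
      refine (Submodule.Quotient.eq p).mpr ?_
      have : T y - T (S w) - T y = -(T (S w)) := by abel
      rw [this, hw]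
      exact p.neg_mem (hPpmem (T y))
  · rintro ⟨⟨Sb', hSb'⟩, ⟨Tb', hTb'⟩⟩
    constructor
    · set S0 : Y →L[ℂ] X := σ.comp (Sb'.comp (mkQL q)) with hS0def
      have hD : ∀ x, S x - S (S0 (S x)) ∈ q := by
        intro x
        have h1 : (Submodule.Quotient.mk (S (S0 (S x))) : Y ⧸ q)
            = Submodule.Quotient.mk (S x) := by
          calc (Submodule.Quotient.mk (S (S0 (S x))) : Y ⧸ q)
              = Sb (Submodule.Quotient.mk (S0 (S x))) := (hSb _).symm
            _ = Sb (Sb' (Submodule.Quotient.mk (S x))) := by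
                rw [hS0def]; simp only [ContinuousLinearMap.comp_apply, mkQL_apply, hσmk]
            _ = Sb (Sb' (Sb (Submodule.Quotient.mk x))) := by rw [hSb]
            _ = Sb (Submodule.Quotient.mk x) := by
                have h9 := DFunLike.congr_fun hSb' (Submodule.Quotient.mk x : X ⧸ p)
                simp only [ContinuousLinearMap.comp_apply] at h9
                exact h9
            _ = Submodule.Quotient.mk (S x) := hSb x
        simpa using q.neg_mem ((Submodule.Quotient.eq q).mp h1)
      refine ⟨S0 + Lq.comp (fq.comp (ContinuousLinearMap.id ℂ Y - S.comp S0)), ?_⟩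
      ext1 x
      simp only [ContinuousLinearMap.comp_apply, ContinuousLinearMap.add_apply,
        ContinuousLinearMap.sub_apply, ContinuousLinearMap.id_apply, map_add]
      have h2 : fq (S x - S (S0 (S x))) = ⟨S x - S (S0 (S x)), hD x⟩ := hfq ⟨_, hD x⟩
      rw [h2, hLq]
      module
    · set T0 : X →L[ℂ] Y := τ.comp (Tb'.comp (mkQL p)) with hT0def
      have hD : ∀ y, T y - T (T0 (T y)) ∈ p := by
        intro y
        have h1 : (Submodule.Quotient.mk (T (T0 (T y))) : X ⧸ p)
            = Submodule.Quotient.mk (T y) := by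
          calc (Submodule.Quotient.mk (T (T0 (T y))) : X ⧸ p)
              = Tb (Submodule.Quotient.mk (T0 (T y))) := (hTb _).symm
            _ = Tb (Tb' (Submodule.Quotient.mk (T y))) := by
                rw [hT0def]; simp only [ContinuousLinearMap.comp_apply, mkQL_apply, hτmk]
            _ = Tb (Tb' (Tb (Submodule.Quotient.mk y))) := by rw [hTb]
            _ = Tb (Submodule.Quotient.mk y) := by
                have h9 := DFunLike.congr_fun hTb' (Submodule.Quotient.mk y : Y ⧸ q)
                simp only [ContinuousLinearMap.comp_apply] at h9
                exact h9
            _ = Submodule.Quotient.mk (T y) := hTb y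
        simpa using p.neg_mem ((Submodule.Quotient.eq p).mp h1)
      refine ⟨T0 + Lp.comp (fp.comp (ContinuousLinearMap.id ℂ X - T.comp T0)), ?_⟩
      ext1 y
      simp only [ContinuousLinearMap.comp_apply, ContinuousLinearMap.add_apply,
        ContinuousLinearMap.sub_apply, ContinuousLinearMap.id_apply, map_add]
      have h2 : fp (T y - T (T0 (T y))) = ⟨T y - T (T0 (T y)), hD y⟩ := hfp ⟨_, hD y⟩
      rw [h2, hLp]
      module

/-- Theorem 5.2: a Fredholm pair `(S,T)` is a regular Fredholm pair if and only if the
induced pair `(S̄,T̄)` on the quotients `X/R(T∘S)`, `Y/R(S∘T)` is a regular (Fredholm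
symmetrical) pair, i.e. both `S̄` and `T̄` are regular operators. -/
theorem regularFredholmPair_iff_quotient_regular {X Y : Type*}
    [NormedAddCommGroup X] [NormedSpace ℂ X] [CompleteSpace X]
    [NormedAddCommGroup Y] [NormedSpace ℂ Y] [CompleteSpace Y]
    (S : X →L[ℂ] Y) (T : Y →L[ℂ] X) (h : IsFredholmPair S T)
    (Sb : (X ⧸ LinearMap.range ((T.comp S : X →L[ℂ] X) : X →ₗ[ℂ] X)) →L[ℂ] (Y ⧸ LinearMap.range ((S.comp T : Y →L[ℂ] Y) : Y →ₗ[ℂ] Y)))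
    (Tb : (Y ⧸ LinearMap.range ((S.comp T : Y →L[ℂ] Y) : Y →ₗ[ℂ] Y)) →L[ℂ] (X ⧸ LinearMap.range ((T.comp S : X →L[ℂ] X) : X →ₗ[ℂ] X)))
    (hSb : ∀ x : X, Sb (Submodule.Quotient.mk x) = Submodule.Quotient.mk (S x))
    (hTb : ∀ y : Y, Tb (Submodule.Quotient.mk y) = Submodule.Quotient.mk (T y)) :
    (IsRegularOp S ∧ IsRegularOp T) ↔ (IsRegularOp Sb ∧ IsRegularOp Tb) := by
  haveI h21 := h.2.1
  haveI h22 := h.2.2.2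
  haveI hq : FiniteDimensional ℂ (LinearMap.range ((S.comp T : Y →L[ℂ] Y) : Y →ₗ[ℂ] Y)) := by
    let φ : (LinearMap.range (T : Y →ₗ[ℂ] X)) →ₗ[ℂ] Y := (S : X →ₗ[ℂ] Y).comp (LinearMap.range (T : Y →ₗ[ℂ] X)).subtype
    have hker : LinearMap.ker φ = (LinearMap.ker (S : X →ₗ[ℂ] Y)).comap (LinearMap.range (T : Y →ₗ[ℂ] X)).subtype := by
      ext z; simp [φ]
    have hrange : LinearMap.range φ = LinearMap.range ((S.comp T : Y →L[ℂ] Y) : Y →ₗ[ℂ] Y) := by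
      ext y
      constructor
      · rintro ⟨⟨z, w, rfl⟩, rfl⟩; exact ⟨w, rfl⟩
      · rintro ⟨w, rfl⟩; exact ⟨⟨T w, w, rfl⟩, rfl⟩
    have e := LinearMap.quotKerEquivRange φ
    rw [hker, hrange] at e
    exact Module.Finite.equiv e
  haveI hp : FiniteDimensional ℂ (LinearMap.range ((T.comp S : X →L[ℂ] X) : X →ₗ[ℂ] X)) := by
    let φ : (LinearMap.range (S : X →ₗ[ℂ] Y)) →ₗ[ℂ] X := (T : Y →ₗ[ℂ] X).comp (LinearMap.range (S : X →ₗ[ℂ] Y)).subtype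
    have hker : LinearMap.ker φ = (LinearMap.ker (T : Y →ₗ[ℂ] X)).comap (LinearMap.range (S : X →ₗ[ℂ] Y)).subtype := by
      ext z; simp [φ]
    have hrange : LinearMap.range φ = LinearMap.range ((T.comp S : X →L[ℂ] X) : X →ₗ[ℂ] X) := by
      ext x
      constructor
      · rintro ⟨⟨z, w, rfl⟩, rfl⟩; exact ⟨w, rfl⟩
      · rintro ⟨w, rfl⟩; exact ⟨⟨S w, w, rfl⟩, rfl⟩
    have e := LinearMap.quotKerEquivRange φ
    rw [hker, hrange] at e
    exact Module.Finite.equiv e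
  exact aux_regular_iff S T (LinearMap.range ((T.comp S : X →L[ℂ] X) : X →ₗ[ℂ] X)) (LinearMap.range ((S.comp T : Y →L[ℂ] Y) : Y →ₗ[ℂ] Y))
    (fun y hy => by obtain ⟨w, hw⟩ := hy; exact ⟨w, hw⟩)
    (fun x hx => by obtain ⟨w, hw⟩ := hx; exact ⟨w, hw⟩)
    Sb Tb hSb hTb
end
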